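/- If J is a nonempty closed subset of S^F, then 𝒜 = ⋂J (the intersection ⋂{p̃ : p̃ ∈ J} of the z-filters corresponding to the points of J) is a pure z-filter on F, and bar(𝒜) = J. -/

import Mathlib

open Set Topology WeakDual BoundedContinuousFunction

noncomputable section

variable (S : Type*) [TopologicalSpace S] [T2Space S] [Semigroup S]

/-- Left translation `λ_s`, as a continuous map, given continuity of left translations. -/
def lamC (hl : ∀ s : S, Continuous (fun t => s * t)) (s : S) : C(S, S) :=
  ⟨fun t => s * t, hl s⟩

/-- An m-admissible subalgebra of `CB(S) = S →ᵇ ℂ`. -/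
structure MAdmissible (hl : ∀ s : S, Continuous (fun t => s * t)) : Type _ where
  carrier : StarSubalgebra ℂ (S →ᵇ ℂ)
  isClosed' : IsClosed (carrier : Set (S →ᵇ ℂ))
  leftInvariant : ∀ (s : S), ∀ f ∈ carrier, f.compContinuous (lamC S hl s) ∈ carrier
  mAdmissible : ∀ (μ : characterSpace ℂ carrier) (f : S →ᵇ ℂ) (hf : f ∈ carrier),
    ∃ g ∈ carrier, ∀ s : S,
      g s = μ ⟨f.compContinuous (lamC S hl s), leftInvariant s f hf⟩

variable {hl : ∀ s : S, Continuous (fun t => s * t)}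

/-- The spectrum `S^F` of an m-admissible subalgebra. -/
abbrev specF (F : MAdmissible S hl) : Type _ := characterSpace ℂ F.carrier

/-- Evaluation at a point, as an algebra homomorphism on `F`. -/
def evalHom (F : MAdmissible S hl) (s : S) : F.carrier →ₐ[ℂ] ℂ where
  toFun f := (f : S →ᵇ ℂ) s
  map_one' := rfl
  map_mul' _ _ := rfl
  map_zero' := rfl
  map_add' _ _ := rfl
  commutes' _ := rfl

/-- The evaluation map `ε : S → S^F`. -/
def epsF (F : MAdmissible S hl) (s : S) : specF S F :=
  haveI : CompleteSpace F.carrier := F.isClosed'.completeSpace_coe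
  CharacterSpace.equivAlgHom.symm (evalHom S F s)

variable (F : MAdmissible S hl)

/-- `Z(F)`: the collection of zero sets of members of `F`. -/
def ZSet : Set (Set S) := {A | ∃ f ∈ F.carrier, A = {s : S | f s = 0}}

/-- z-filters on `F`. -/
def IsZFilter (𝒜 : Set (Set S)) : Prop :=
  𝒜 ⊆ ZSet S F ∧ ∅ ∉ 𝒜 ∧ Set.univ ∈ 𝒜 ∧
    (∀ A ∈ 𝒜, ∀ B ∈ 𝒜, A ∩ B ∈ 𝒜) ∧
    ∀ A ∈ 𝒜, ∀ B ∈ ZSet S F, A ⊆ B → B ∈ 𝒜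

/-- `FS`: the collection of z-ultrafilters on `F`. -/
def zUltra : Set (Set (Set S)) :=
  {p | IsZFilter S F p ∧ ∀ q, IsZFilter S F q → p ⊆ q → q = p}

/-- `cl ε(A)` in `S^F`. -/
def epsCl (A : Set S) : Set (specF S F) := closure (epsF S F '' A)

/-- `⋂_{A ∈ p} cl ε(A)`; for `p ∈ FS` this is the singleton of the corresponding point of `S^F`. -/
def core (p : Set (Set S)) : Set (specF S F) := ⋂ A ∈ p, epsCl S F A

/-- `p̃ = ⋂ [p]`, the intersection of the equivalence class of `p`. -/
def tilde (p : Set (Set S)) : Set (Set S) :=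
  ⋂₀ {q | q ∈ zUltra S F ∧ core S F q = core S F p}

/-- pure z-filters. -/
def IsPure (𝒜 : Set (Set S)) : Prop :=
  IsZFilter S F 𝒜 ∧ ∀ p ∈ zUltra S F, 𝒜 ⊆ p → 𝒜 ⊆ tilde S F p

/-- `bar(𝒜) = {p̃ : 𝒜 ⊆ p}`, viewed as a subset of `S^F` via the identification of
`p̃` with the point `μ` such that `⋂_{A ∈ p} cl ε(A) = {μ}`. -/
def barSet (𝒜 : Set (Set S)) : Set (specF S F) :=
  {μ | ∃ p ∈ zUltra S F, 𝒜 ⊆ p ∧ core S F p = {μ}}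

/-- `𝒜° = {A ∈ 𝒜 : bar(𝒜) ⊆ int cl ε(A)}`. -/
def circA (𝒜 : Set (Set S)) : Set (Set S) :=
  {A ∈ 𝒜 | barSet S F 𝒜 ⊆ interior (epsCl S F A)}

/-- `⋂ J`, the intersection of the z-filters `p̃` corresponding to points of `J ⊆ S^F`. -/
def interOf (J : Set (specF S F)) : Set (Set S) :=
  ⋂₀ {C | ∃ p ∈ zUltra S F, ∃ μ ∈ J, core S F p = {μ} ∧ C = tilde S F p}

/-- `⋂ [p̃]_R` for a relation `r` on `S^F`. -/
def classInter (r : specF S F → specF S F → Prop) (μ : specF S F) : Set (Set S) :=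
  interOf S F {ν | r μ ν}

/-- `Ω_ℬ(A) = {x ∈ S : λ_x⁻¹(A) ∈ ℬ}`. -/
def OmegaZ (ℬ : Set (Set S)) (A : Set S) : Set S := {x : S | (fun t => x * t) ⁻¹' A ∈ ℬ}

/-- `𝒜 + ℬ`. -/
def zsum (𝒜 ℬ : Set (Set S)) : Set (Set S) :=
  {A ∈ ZSet S F | ∀ F' ∈ ZSet S F, OmegaZ S ℬ A ⊆ F' → F' ∈ 𝒜}

/-- `𝒜 ⊙ ℬ = ⋂ bar(𝒜 + ℬ)`. -/
def odot (𝒜 ℬ : Set (Set S)) : Set (Set S) :=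
  interOf S F (barSet S F (zsum S F 𝒜 ℬ))

/-- topological choice functions for a set `Γ` of z-filters. -/
def IsTCF (Γ : Set (Set (Set S))) (f : Set (Set S) → Set S) : Prop :=
  ∀ L ∈ Γ, f L ∈ L ∧ barSet S F L ⊆ interior (epsCl S F (f L))

/-- `A* = {𝓛 ∈ Γ : bar(𝓛) ∩ cl ε(A) ≠ ∅}`. -/
def starSet (Γ : Set (Set (Set S))) (A : Set S) : Set Γ :=
  {L : Γ | (barSet S F (L : Set (Set S)) ∩ epsCl S F A).Nonempty}

/-- `A_* = {𝓛 ∈ Γ : bar(𝓛) ⊆ cl ε(A)}`. -/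
def lowStar (Γ : Set (Set (Set S))) (A : Set S) : Set Γ :=
  {L : Γ | barSet S F (L : Set (Set S)) ⊆ epsCl S F A}

/-- The `τ*` quotient topology on `Γ`. -/
def tauStar (Γ : Set (Set (Set S))) : TopologicalSpace Γ :=
  TopologicalSpace.generateFrom {U | ∃ A ∈ ZSet S F, U = (starSet S F Γ A)ᶜ}

/-- The `τ_*` quotient topology on `Γ`. -/
def tauLow (Γ : Set (Set (Set S))) : TopologicalSpace Γ :=
  TopologicalSpace.generateFrom {U | ∃ A ∈ ZSet S F, U = (lowStar S F Γ A)ᶜ}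

/-- `Γ` is a quotient of `S^F`: conditions (a) and (b) of Theorem 3.9. -/
def IsQuotientOf (Γ : Set (Set (Set S))) : Prop :=
  (∀ L ∈ Γ, IsPure S F L) ∧
  (∀ f : Set (Set S) → Set S, IsTCF S F Γ f →
    ∃ 𝓕 : Finset (Set (Set S)), ↑𝓕 ⊆ Γ ∧
      (Set.univ : Set (specF S F)) = ⋃ L ∈ 𝓕, interior (epsCl S F (f L))) ∧
  (∀ L ∈ Γ, ∀ K ∈ Γ, L ≠ K →
    ∃ A ∈ circA S F L, ∃ B ∈ circA S F K, ∀ C ∈ Γ,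
      (∀ H ∈ ZSet S F, (interior (epsCl S F A))ᶜ ⊆ interior (epsCl S F H) → H ∈ C) ∨
      (∀ T ∈ ZSet S F, (interior (epsCl S F B))ᶜ ⊆ interior (epsCl S F T) → T ∈ C))

/-- The defining property of the map `γ : S^F → Γ` sending `p̃` to the unique member of `Γ`
contained in `p̃`. -/
def IsGamma (Γ : Set (Set (Set S))) (γ : specF S F → Γ) : Prop :=
  ∀ (μ : specF S F) (p : Set (Set S)), p ∈ zUltra S F → core S F p = {μ} →
    (γ μ : Set (Set S)) ⊆ tilde S F p

/-- The defining property of the multiplication of `S^F`: `(μν)(f) = μ(T_ν f)` where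
`(T_ν f)(s) = ν(L_s f)`. -/
def IsSpecMul (mul : specF S F → specF S F → specF S F) : Prop :=
  ∀ (μ ν : specF S F) (f : S →ᵇ ℂ) (hf : f ∈ F.carrier) (g : S →ᵇ ℂ) (hg : g ∈ F.carrier),
    (∀ s : S, g s = ν ⟨f.compContinuous (lamC S hl s), F.leftInvariant s f hf⟩) →
    mul μ ν ⟨f, hf⟩ = μ ⟨g, hg⟩

/-- `LMC(S)`, as a subset of `CB(S)`. -/
def LMCset (hl : ∀ s : S, Continuous (fun t => s * t)) : Set (S →ᵇ ℂ) :=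
  {f | ∀ μ : characterSpace ℂ (S →ᵇ ℂ),
    Continuous fun s : S => μ (f.compContinuous (lamC S hl s))}

set_option linter.unusedSectionVars false
set_option synthInstance.maxHeartbeats 1000000
set_option maxHeartbeats 1000000

section Aux
variable {S}
variable {F}

lemma Fclosed : IsClosed ((F.carrier : Set (S →ᵇ ℂ))) := F.isClosed'

attribute [local instance] Fclosed

lemma specNormal : NormalSpace (specF S F) := by infer_instance

attribute [local instance] specNormal

lemma eps_apply (s : S) (f : F.carrier) : epsF S F s f = (f : S →ᵇ ℂ) s := rfl

lemma exists_gelfand (φ : C(specF S F, ℂ)) : ∃ f : F.carrier, ∀ μ : specF S F, μ f = φ μ := by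
  obtain ⟨f, hf⟩ := (gelfandTransform_bijective (A := F.carrier)).2 φ
  exact ⟨f, fun μ => by rw [← hf]; rfl⟩

/-- zero sets from real continuous functions on the spectrum -/
lemma zset_of_cont (φ : C(specF S F, ℝ)) : {s : S | φ (epsF S F s) = 0} ∈ ZSet S F := by
  obtain ⟨f, hf⟩ := exists_gelfand (F := F)
    (⟨fun x => (φ x : ℂ), Complex.continuous_ofReal.comp φ.continuous⟩ : C(specF S F, ℂ))
  refine ⟨(f : S →ᵇ ℂ), f.2, ?_⟩
  ext s
  have h1 : (f : S →ᵇ ℂ) s = ((φ (epsF S F s) : ℂ)) := by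
    rw [← eps_apply s f, hf (epsF S F s)]; rfl
  simp only [Set.mem_setOf_eq, h1]
  exact (Complex.ofReal_eq_zero).symm

lemma univ_mem_ZSet : Set.univ ∈ ZSet S F := by
  refine ⟨0, zero_mem _, ?_⟩
  ext s; simp

lemma inter_mem_ZSet {A B : Set S} (hA : A ∈ ZSet S F) (hB : B ∈ ZSet S F) :
    A ∩ B ∈ ZSet S F := by
  obtain ⟨f, hf, rfl⟩ := hA
  obtain ⟨g, hg, rfl⟩ := hB
  refine ⟨star f * f + star g * g, add_mem (mul_mem (star_mem hf) hf) (mul_mem (star_mem hg) hg), ?_⟩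
  ext s
  simp only [Set.mem_inter_iff, Set.mem_setOf_eq, BoundedContinuousFunction.coe_add,
    BoundedContinuousFunction.coe_mul, BoundedContinuousFunction.coe_star, Pi.add_apply,
    Pi.mul_apply, Pi.star_apply]
  constructor
  · rintro ⟨h1, h2⟩; simp [h1, h2]
  · intro h
    have haf : star (f s) * f s = (Complex.normSq (f s) : ℂ) := by
      rw [Complex.star_def, mul_comm, Complex.mul_conj]
    have hag : star (g s) * g s = (Complex.normSq (g s) : ℂ) := by
      rw [Complex.star_def, mul_comm, Complex.mul_conj]
    have h' : ((Complex.normSq (f s) : ℂ) + (Complex.normSq (g s) : ℂ)) = 0 := by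
      rw [← haf, ← hag]; exact h
    rw [← Complex.ofReal_add, Complex.ofReal_eq_zero] at h'
    have h1 : Complex.normSq (f s) = 0 ∧ Complex.normSq (g s) = 0 := by
      constructor <;> nlinarith [Complex.normSq_nonneg (f s), Complex.normSq_nonneg (g s)]
    exact ⟨Complex.normSq_eq_zero.mp h1.1, Complex.normSq_eq_zero.mp h1.2⟩

lemma dense_eps : Dense (Set.range (epsF S F)) := by
  by_contra h
  unfold Dense at h
  push_neg at h
  obtain ⟨μ, hμ⟩ := h
  obtain ⟨φ, hφ0, hφ1, -⟩ := exists_continuous_zero_one_of_isClosed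
    isClosed_closure (isClosed_singleton (x := μ))
    (Set.disjoint_singleton_right.mpr hμ)
  obtain ⟨f, hf⟩ := exists_gelfand (F := F)
    (⟨fun x => (φ x : ℂ), Complex.continuous_ofReal.comp φ.continuous⟩ : C(specF S F, ℂ))
  have hf0 : (f : S →ᵇ ℂ) = 0 := by
    ext s
    have h2 := hf (epsF S F s)
    rw [eps_apply] at h2
    have h3 : φ (epsF S F s) = 0 := hφ0 (subset_closure (Set.mem_range_self s))
    simp only [ContinuousMap.coe_mk] at h2
    rw [h2, h3]
    simp
  have hfz : f = (0 : F.carrier) := Subtype.ext hf0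
  have h1 := hf μ
  rw [hfz, map_zero] at h1
  have h2 : φ μ = 1 := by simpa using hφ1 (Set.mem_singleton μ)
  have h3 : (φ μ : ℂ) = 0 := h1.symm
  rw [h2] at h3
  norm_num at h3

/-! ### z-filter machinery -/

lemma isZFilter_sInter {𝒮 : Set (Set (Set S))} (hne : 𝒮.Nonempty)
    (h : ∀ C ∈ 𝒮, IsZFilter S F C) : IsZFilter S F (⋂₀ 𝒮) := by
  obtain ⟨C₀, hC₀⟩ := hne
  refine ⟨fun A hA => (h C₀ hC₀).1 (hA C₀ hC₀), fun he => (h C₀ hC₀).2.1 (he C₀ hC₀),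
    fun C hC => (h C hC).2.2.1, fun A hA B hB C hC => (h C hC).2.2.2.1 A (hA C hC) B (hB C hC),
    fun A hA B hB hAB C hC => (h C hC).2.2.2.2 A (hA C hC) B hB hAB⟩

/-- Zorn: every z-filter extends to a z-ultrafilter. -/
lemma exists_zUltra {p : Set (Set S)} (hp : IsZFilter S F p) :
    ∃ q ∈ zUltra S F, p ⊆ q := by
  obtain ⟨m, hm⟩ := zorn_subset_nonempty {q | IsZFilter S F q} (fun c hc hchain hcne => by
    refine ⟨⋃₀ c, ?_, fun s hs => Set.subset_sUnion_of_mem hs⟩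
    obtain ⟨q₀, hq₀⟩ := hcne
    refine ⟨?_, ?_, ?_, ?_, ?_⟩
    · rintro A ⟨q, hq, hAq⟩; exact (hc hq).1 hAq
    · rintro ⟨q, hq, hq'⟩; exact (hc hq).2.1 hq'
    · exact ⟨q₀, hq₀, (hc hq₀).2.2.1⟩
    · rintro A ⟨q1, hq1, hA⟩ B ⟨q2, hq2, hB⟩
      rcases hchain.total hq1 hq2 with h12 | h21
      · exact ⟨q2, hq2, (hc hq2).2.2.2.1 A (h12 hA) B hB⟩
      · exact ⟨q1, hq1, (hc hq1).2.2.2.1 A hA B (h21 hB)⟩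
    · rintro A ⟨q, hq, hA⟩ B hB hAB
      exact ⟨q, hq, (hc hq).2.2.2.2 A hA B hB hAB⟩) p hp
  exact ⟨m, ⟨hm.2.1, fun q hq hmq => Set.Subset.antisymm (hm.2.2 hq hmq) hmq⟩, hm.1⟩

/-- A z-ultrafilter contains every zero set meeting all its members. -/
lemma mem_zUltra_of_meets {p : Set (Set S)} (hp : p ∈ zUltra S F) {Z : Set S}
    (hZ : Z ∈ ZSet S F) (h : ∀ A ∈ p, (Z ∩ A).Nonempty) : Z ∈ p := by
  set q : Set (Set S) := {B | B ∈ ZSet S F ∧ ∃ A ∈ p, Z ∩ A ⊆ B} with hq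
  have hq_f : IsZFilter S F q := by
    refine ⟨fun B hB => hB.1, ?_, ⟨univ_mem_ZSet, Set.univ, hp.1.2.2.1, Set.subset_univ _⟩,
      ?_, ?_⟩
    · rintro ⟨-, A, hA, hsub⟩
      exact (h A hA).ne_empty (Set.subset_empty_iff.mp hsub)
    · rintro B1 ⟨hB1, A1, hA1, hs1⟩ B2 ⟨hB2, A2, hA2, hs2⟩
      exact ⟨inter_mem_ZSet hB1 hB2, A1 ∩ A2, hp.1.2.2.2.1 A1 hA1 A2 hA2,
        fun x hx => ⟨hs1 ⟨hx.1, hx.2.1⟩, hs2 ⟨hx.1, hx.2.2⟩⟩⟩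
    · rintro B1 ⟨hB1, A1, hA1, hs1⟩ B2 hB2 hB12
      exact ⟨hB2, A1, hA1, fun x hx => hB12 (hs1 hx)⟩
  have hpq : p ⊆ q := fun A hA => ⟨hp.1.1 hA, A, hA, Set.inter_subset_right⟩
  have := hp.2 q hq_f hpq
  rw [← this]
  exact ⟨hZ, Set.univ, hp.1.2.2.1, fun x hx => hx.1⟩

/-- z-ultrafilters are prime (for covers of `S`). -/
lemma zUltra_prime {p : Set (Set S)} (hp : p ∈ zUltra S F) {Z₁ Z₂ : Set S}
    (h1 : Z₁ ∈ ZSet S F) (h2 : Z₂ ∈ ZSet S F) (hcover : Z₁ ∪ Z₂ = Set.univ) :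
    Z₁ ∈ p ∨ Z₂ ∈ p := by
  by_cases hZ1 : Z₁ ∈ p
  · exact Or.inl hZ1
  right
  have : ¬ ∀ A ∈ p, (Z₁ ∩ A).Nonempty := fun hmeet => hZ1 (mem_zUltra_of_meets hp h1 hmeet)
  push_neg at this
  obtain ⟨A, hA, hAempty⟩ := this
  refine mem_zUltra_of_meets hp h2 (fun B hB => ?_)
  have hAB : A ∩ B ∈ p := hp.1.2.2.2.1 A hA B hB
  have hne : (A ∩ B).Nonempty := by
    rcases Set.eq_empty_or_nonempty (A ∩ B) with he | hne
    · exact absurd (he ▸ hAB) hp.1.2.1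
    · exact hne
  obtain ⟨x, hxA, hxB⟩ := hne
  have hx1 : x ∉ Z₁ := fun hx1 => Set.eq_empty_iff_forall_notMem.mp hAempty x ⟨hx1, hxA⟩
  have hx2 : x ∈ Z₂ := by
    have hxu := Set.mem_univ x
    rw [← hcover, Set.mem_union] at hxu
    tauto
  exact ⟨x, hx2, hxB⟩

lemma epsCl_subset_le {A : Set S} {φ : C(specF S F, ℝ)} {c : ℝ}
    (h : ∀ s ∈ A, φ (epsF S F s) ≤ c) : epsCl S F A ⊆ {x | φ x ≤ c} := by
  refine closure_minimal ?_ (isClosed_le φ.continuous continuous_const)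
  rintro - ⟨s, hs, rfl⟩
  exact h s hs

lemma epsCl_subset_ge {A : Set S} {φ : C(specF S F, ℝ)} {c : ℝ}
    (h : ∀ s ∈ A, c ≤ φ (epsF S F s)) : epsCl S F A ⊆ {x | c ≤ φ x} := by
  refine closure_minimal ?_ (isClosed_le continuous_const φ.continuous)
  rintro - ⟨s, hs, rfl⟩
  exact h s hs

/-- key level-set lemma: if `ν ∈ core p` and `φ ν < c` then `{φ ∘ ε ≤ c} ∈ p`. -/
lemma level_mem {p : Set (Set S)} (hp : p ∈ zUltra S F) {ν : specF S F}
    (hν : ν ∈ core S F p) (φ : C(specF S F, ℝ)) {c : ℝ} (hφν : φ ν < c) :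
    {s : S | φ (epsF S F s) ≤ c} ∈ p := by
  set a : C(specF S F, ℝ) := ⟨fun x => max (φ x - c) 0,
    ((φ.continuous.sub continuous_const).max continuous_const)⟩ with ha
  set b : C(specF S F, ℝ) := ⟨fun x => max (c - φ x) 0,
    ((continuous_const.sub φ.continuous).max continuous_const)⟩ with hb
  have hA : {s : S | φ (epsF S F s) ≤ c} = {s : S | a (epsF S F s) = 0} := by
    ext s
    simp only [Set.mem_setOf_eq, ha, ContinuousMap.coe_mk, max_eq_right_iff, sub_nonpos]
  have hB : {s : S | c ≤ φ (epsF S F s)} = {s : S | b (epsF S F s) = 0} := by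
    ext s
    simp only [Set.mem_setOf_eq, hb, ContinuousMap.coe_mk, max_eq_right_iff, sub_nonpos]
  have hAz : {s : S | φ (epsF S F s) ≤ c} ∈ ZSet S F := hA ▸ zset_of_cont a
  have hBz : {s : S | c ≤ φ (epsF S F s)} ∈ ZSet S F := hB ▸ zset_of_cont b
  have hcover : {s : S | φ (epsF S F s) ≤ c} ∪ {s : S | c ≤ φ (epsF S F s)} = Set.univ := by
    ext s; simp [le_total]
  rcases zUltra_prime hp hAz hBz hcover with h | h
  · exact h
  · exfalso
    have hsub : epsCl S F {s : S | c ≤ φ (epsF S F s)} ⊆ {x | c ≤ φ x} :=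
      epsCl_subset_ge (fun s hs => hs)
    have : ν ∈ epsCl S F {s : S | c ≤ φ (epsF S F s)} := by
      simp only [core, Set.mem_iInter] at hν
      exact hν _ h
    exact absurd (hsub this) (by simpa using hφν.not_ge)

/-- the core of a z-ultrafilter is nonempty. -/
lemma core_nonempty {p : Set (Set S)} (hp : p ∈ zUltra S F) : (core S F p).Nonempty := by
  have hfin : ∀ t : Finset (Set S), ↑t ⊆ p → ⋂₀ (t : Set (Set S)) ∈ p := by
    intro t
    classical
    induction t using Finset.induction with
    | empty => intro _; simpa using hp.1.2.2.1
    | insert A t' hx ih =>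
      intro hsub
      have hA : A ∈ p := hsub (Finset.mem_insert_self _ _)
      have ht' : ⋂₀ (t' : Set (Set S)) ∈ p :=
        ih (fun B hB => hsub (Finset.mem_insert_of_mem hB))
      have := hp.1.2.2.2.1 A hA _ ht'
      simpa [Finset.coe_insert, Set.sInter_insert] using this
  by_contra hempty
  rw [Set.not_nonempty_iff_eq_empty] at hempty
  have hcore : core S F p = ⋂ (A : ↥p), epsCl S F (A : Set S) := by
    rw [core, Set.biInter_eq_iInter]
  have h0 : ((Set.univ : Set (specF S F)) ∩ ⋂ (A : ↥p), epsCl S F (A : Set S)) = ∅ := by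
    rw [Set.univ_inter, ← hcore, hempty]
  obtain ⟨u, hu⟩ := IsCompact.elim_finite_subfamily_closed isCompact_univ
    (fun A : ↥p => epsCl S F (A : Set S)) (fun A => isClosed_closure) h0
  rw [Set.univ_inter] at hu
  classical
  set t : Finset (Set S) := u.image Subtype.val with ht
  have htp : ↑t ⊆ p := by
    intro B hB
    simp only [ht, Finset.coe_image, Set.mem_image] at hB
    obtain ⟨⟨B', hB'⟩, -, rfl⟩ := hB
    exact hB'
  have hmem : ⋂₀ (t : Set (Set S)) ∈ p := hfin t htp
  have hne : (⋂₀ (t : Set (Set S))).Nonempty := by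
    rcases Set.eq_empty_or_nonempty (⋂₀ (t : Set (Set S))) with he | hne
    · exact absurd (he ▸ hmem) hp.1.2.1
    · exact hne
  obtain ⟨s, hs⟩ := hne
  have : epsF S F s ∈ ⋂ A ∈ u, epsCl S F ((A : Set S)) := by
    refine Set.mem_iInter₂.mpr (fun A hA => ?_)
    refine subset_closure ⟨s, ?_, rfl⟩
    exact hs (A : Set S) (Finset.mem_coe.mpr (Finset.mem_image_of_mem Subtype.val hA))
  rw [hu] at this
  exact this

/-- the core of a z-ultrafilter is a singleton. -/
lemma core_singleton {p : Set (Set S)} (hp : p ∈ zUltra S F) :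
    ∃ μ : specF S F, core S F p = {μ} := by
  obtain ⟨μ, hμ⟩ := core_nonempty hp
  refine ⟨μ, Set.eq_singleton_iff_unique_mem.mpr ⟨hμ, fun ν hν => ?_⟩⟩
  by_contra hne
  obtain ⟨φ, hφ0, hφ1, -⟩ := exists_continuous_zero_one_of_isClosed
    (isClosed_singleton (x := ν)) (isClosed_singleton (x := μ))
    (by simpa [Set.disjoint_singleton] using hne)
  have hν0 : φ ν = 0 := hφ0 rfl
  have hμ1 : φ μ = 1 := hφ1 rfl
  have hmem : {s : S | φ (epsF S F s) ≤ 1/3} ∈ p :=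
    level_mem hp hν φ (by rw [hν0]; norm_num)
  have hsub : epsCl S F {s : S | φ (epsF S F s) ≤ 1/3} ⊆ {x | φ x ≤ 1/3} :=
    epsCl_subset_le (fun s hs => hs)
  have : μ ∈ epsCl S F {s : S | φ (epsF S F s) ≤ 1/3} := by
    simp only [core, Set.mem_iInter] at hμ
    exact hμ _ hmem
  have := hsub this
  rw [Set.mem_setOf_eq, hμ1] at this
  norm_num at this

/-- every point of the spectrum comes from a z-ultrafilter. -/
lemma exists_zUltra_core (μ : specF S F) : ∃ p ∈ zUltra S F, core S F p = {μ} := by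
  set 𝒟 : Set (Set S) := {B | B ∈ ZSet S F ∧ ∃ U : Set (specF S F),
    IsOpen U ∧ μ ∈ U ∧ epsF S F ⁻¹' U ⊆ B} with h𝒟
  have h𝒟f : IsZFilter S F 𝒟 := by
    refine ⟨fun B hB => hB.1, ?_, ⟨univ_mem_ZSet, Set.univ, isOpen_univ, trivial,
      Set.subset_univ _⟩, ?_, ?_⟩
    · rintro ⟨-, U, hU, hμU, hsub⟩
      obtain ⟨x, hxr, hxU⟩ := dense_eps.exists_mem_open hU ⟨μ, hμU⟩
      obtain ⟨s, rfl⟩ := hxr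
      exact hsub hxU
    · rintro B1 ⟨hB1, U1, hU1, hμ1, hs1⟩ B2 ⟨hB2, U2, hU2, hμ2, hs2⟩
      exact ⟨inter_mem_ZSet hB1 hB2, U1 ∩ U2, hU1.inter hU2, ⟨hμ1, hμ2⟩,
        fun s hs => ⟨hs1 hs.1, hs2 hs.2⟩⟩
    · rintro B1 ⟨hB1, U1, hU1, hμ1, hs1⟩ B2 hB2 h12
      exact ⟨hB2, U1, hU1, hμ1, fun s hs => h12 (hs1 hs)⟩
  obtain ⟨p, hp, h𝒟p⟩ := exists_zUltra h𝒟f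
  have hμcore : μ ∈ core S F p := by
    rw [core, Set.mem_iInter₂]
    intro A hA
    by_contra hμA
    obtain ⟨φ, hφ0, hφ1, -⟩ := exists_continuous_zero_one_of_isClosed
      (isClosed_closure (s := epsF S F '' A)) (isClosed_singleton (x := μ))
      (Set.disjoint_singleton_right.mpr hμA)
    set b : C(specF S F, ℝ) := ⟨fun x => max ((1:ℝ)/2 - φ x) 0,
      ((continuous_const.sub φ.continuous).max continuous_const)⟩ with hb
    have hBz : {s : S | b (epsF S F s) = 0} ∈ ZSet S F := zset_of_cont b
    have hBD : {s : S | b (epsF S F s) = 0} ∈ 𝒟 := by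
      refine ⟨hBz, {x | 1/2 < φ x}, isOpen_lt continuous_const φ.continuous, ?_, ?_⟩
      · simp only [Set.mem_setOf_eq, hφ1 rfl]; norm_num
      · intro s hs
        simp only [Set.mem_preimage, Set.mem_setOf_eq] at hs
        simp only [Set.mem_setOf_eq, hb, ContinuousMap.coe_mk]
        rw [max_eq_right (by linarith)]
    have hBp : {s : S | b (epsF S F s) = 0} ∈ p := h𝒟p hBD
    have hABp : A ∩ {s : S | b (epsF S F s) = 0} ∈ p := hp.1.2.2.2.1 A hA _ hBp
    have hABempty : A ∩ {s : S | b (epsF S F s) = 0} = ∅ := by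
      ext s
      simp only [Set.mem_inter_iff, Set.mem_setOf_eq, Set.mem_empty_iff_false, iff_false,
        not_and]
      intro hsA
      have hφs : φ (epsF S F s) = 0 := hφ0 (subset_closure ⟨s, hsA, rfl⟩)
      simp only [hb, ContinuousMap.coe_mk, hφs, sub_zero]
      rw [max_eq_left (by norm_num)]
      norm_num
    exact hp.1.2.1 (hABempty ▸ hABp)
  obtain ⟨ν, hν⟩ := core_singleton hp
  have : μ = ν := by rw [hν] at hμcore; exact hμcore
  exact ⟨p, hp, this ▸ hν⟩

lemma tilde_isZFilter {p : Set (Set S)} (hp : p ∈ zUltra S F) :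
    IsZFilter S F (tilde S F p) :=
  isZFilter_sInter ⟨p, hp, rfl⟩ (fun q hq => hq.1.1)

lemma tilde_subset {p : Set (Set S)} (hp : p ∈ zUltra S F) : tilde S F p ⊆ p :=
  Set.sInter_subset_of_mem ⟨hp, rfl⟩

/-- Lemma 2.8 (5). -/
theorem statement13
    (hr : ∀ s : S, Continuous (fun t => t * s))
    (J : Set (specF S F)) (hJc : IsClosed J) (hJne : J.Nonempty) :
    IsPure S F (interOf S F J) ∧ barSet S F (interOf S F J) = J := by
  have h𝒯ne : {C | ∃ p ∈ zUltra S F, ∃ μ ∈ J, core S F p = {μ} ∧ C = tilde S F p}.Nonempty := by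
    obtain ⟨μ, hμ⟩ := hJne
    obtain ⟨p, hp, hcore⟩ := exists_zUltra_core μ
    exact ⟨tilde S F p, p, hp, μ, hμ, hcore, rfl⟩
  have h𝒯f : ∀ C ∈ {C | ∃ p ∈ zUltra S F, ∃ μ ∈ J, core S F p = {μ} ∧ C = tilde S F p},
      IsZFilter S F C := by
    rintro C ⟨p, hp, μ, hμ, hcore, rfl⟩
    exact tilde_isZFilter hp
  have hAf : IsZFilter S F (interOf S F J) := isZFilter_sInter h𝒯ne h𝒯f
  have hJbar : J ⊆ barSet S F (interOf S F J) := by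
    intro μ hμ
    obtain ⟨p, hp, hcore⟩ := exists_zUltra_core μ
    refine ⟨p, hp, ?_, hcore⟩
    intro A hA
    exact tilde_subset hp (hA (tilde S F p) ⟨p, hp, μ, hμ, hcore, rfl⟩)
  have hbarJ : barSet S F (interOf S F J) ⊆ J := by
    rintro μ ⟨q, hq, hAq, hcoreq⟩
    by_contra hμJ
    obtain ⟨φ, hφ0, hφ1, -⟩ := exists_continuous_zero_one_of_isClosed hJc
      (isClosed_singleton (x := μ)) (Set.disjoint_singleton_right.mpr hμJ)
    have hAmem : {s : S | φ (epsF S F s) ≤ 1/3} ∈ interOf S F J := by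
      intro C hC
      obtain ⟨p, hp, ν, hν, hcorep, rfl⟩ := hC
      refine Set.mem_sInter.mpr ?_
      rintro r ⟨hr, hcr⟩
      have hνr : ν ∈ core S F r := by rw [hcr, hcorep]; rfl
      have hφν : φ ν = 0 := by simpa using hφ0 hν
      exact level_mem hr hνr φ (by rw [hφν]; norm_num)
    have hAq' : {s : S | φ (epsF S F s) ≤ 1/3} ∈ q := hAq hAmem
    have hμcore : μ ∈ core S F q := by rw [hcoreq]; rfl
    have hμcl : μ ∈ epsCl S F {s : S | φ (epsF S F s) ≤ 1/3} := by
      simp only [core, Set.mem_iInter] at hμcore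
      exact hμcore _ hAq'
    have := epsCl_subset_le (F := F) (φ := φ) (c := 1/3) (fun s hs => hs) hμcl
    rw [Set.mem_setOf_eq] at this
    have hμ1 : φ μ = 1 := by simpa using hφ1 (Set.mem_singleton μ)
    rw [hμ1] at this
    norm_num at this
  have hpure : ∀ p ∈ zUltra S F, interOf S F J ⊆ p → interOf S F J ⊆ tilde S F p := by
    intro q hq hAq
    obtain ⟨μ, hcore⟩ := core_singleton hq
    have hμJ : μ ∈ J := hbarJ ⟨q, hq, hAq, hcore⟩
    exact Set.sInter_subset_of_mem ⟨q, hq, μ, hμJ, hcore, rfl⟩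
  exact ⟨⟨hAf, hpure⟩, subset_antisymm hbarJ hJbar⟩

end Aux

end
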